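/- Let A : H ⇉ H be maximally monotone, B : H → H be β-cocoercive (β > 0), with zer(A+B) ≠ ∅, and γ ∈ (0, 2β]. Under the parameter conditions 0 < β_n ≤ 1, β_n → 1, ∑(1-β_n) = ∞, ∑|β_n - β_{n-1}| < ∞, 0 < λ_n ≤ (4β - γ)/(2β), liminf λ_n > 0, ∑|λ_n - λ_{n-1}| < ∞, the iteration x_{n+1} = (1-λ_n)β_n x_n + λ_n J_{γA}(β_n x_n - γ B(β_n x_n)) converges strongly to the projection of 0 onto zer(A+B), the minimal norm zero of A + B. -/

import Mathlib

set_option maxHeartbeats 1000000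

open Filter Topology Pointwise RealInnerProductSpace

section
variable {H : Type*} [NormedAddCommGroup H] [InnerProductSpace ℝ H]

/-- A set-valued operator is monotone. -/
def MonotoneOp (A : H → Set H) : Prop :=
  ∀ x y u v : H, u ∈ A x → v ∈ A y → 0 ≤ ⟪x - y, u - v⟫

/-- A set-valued operator is maximally monotone. -/
def MaximallyMonotoneOp (A : H → Set H) : Prop :=
  MonotoneOp A ∧ ∀ x u : H, (∀ y v : H, v ∈ A y → 0 ≤ ⟪x - y, u - v⟫) → u ∈ A x

end

/-! ### Auxiliary lemmas -/

lemma norm_convex_comb_sq {H : Type*} [NormedAddCommGroup H] [InnerProductSpace ℝ H]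
    (a b : H) (t : ℝ) :
    ‖t • a + (1 - t) • b‖ ^ 2 = t * ‖a‖ ^ 2 + (1 - t) * ‖b‖ ^ 2 - t * (1 - t) * ‖a - b‖ ^ 2 := by
  have h1 := norm_add_sq_real (t • a) ((1 - t) • b)
  have h2 := norm_sub_sq_real a b
  simp only [norm_smul, real_inner_smul_left, real_inner_smul_right, Real.norm_eq_abs,
    mul_pow, sq_abs] at h1
  nlinarith [h1, h2]

lemma norm_sub_smul_sq {H : Type*} [NormedAddCommGroup H] [InnerProductSpace ℝ H]
    (a v : H) (t : ℝ) :
    ‖a - t • v‖ ^ 2 = ‖a‖ ^ 2 - 2 * t * ⟪a, v⟫ + t ^ 2 * ‖v‖ ^ 2 := by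
  have h := norm_sub_sq_real a (t • v)
  simp only [norm_smul, real_inner_smul_right, Real.norm_eq_abs, mul_pow, sq_abs] at h
  linarith

lemma norm_le_of_sq_le_sq {a b : ℝ} (h : a^2 ≤ b^2) (ha : 0 ≤ a) (hb : 0 ≤ b) : a ≤ b := by
  nlinarith

/-- Xu's lemma on real recursive inequalities. -/
lemma xu_lemma {a δ σ ε : ℕ → ℝ} (ha0 : ∀ n, 0 ≤ a n)
    (hδ0 : ∀ n, 0 ≤ δ n) (hδ1 : ∀ n, δ n ≤ 1)
    (hδdiv : Tendsto (fun n => ∑ i ∈ Finset.range n, δ i) atTop atTop)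
    (hσ : ∀ η > (0:ℝ), ∀ᶠ n in atTop, σ n ≤ η)
    (hε : Summable ε) (hε0 : ∀ n, 0 ≤ ε n)
    (hrec : ∀ n, a (n + 1) ≤ (1 - δ n) * a n + δ n * σ n + ε n) :
    Tendsto a atTop (nhds 0) := by
  rw [Metric.tendsto_atTop]
  intro η0 hη0
  set η := η0 / 4 with hηdef
  have hη : 0 < η := by positivity
  obtain ⟨N₁, hN₁⟩ := (hσ η hη).exists_forall_of_atTop
  obtain ⟨N₂, hN₂⟩ := eventually_atTop.mp
    ((tendsto_sum_nat_add ε).eventually (eventually_le_nhds hη))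
  set N := max N₁ N₂ with hNdef
  clear_value N
  have hN1N : N₁ ≤ N := by rw [hNdef]; exact le_max_left _ _
  have hN2N : N₂ ≤ N := by rw [hNdef]; exact le_max_right _ _
  have htail : ∀ m, ∑ i ∈ Finset.range m, ε (N + i) ≤ η := by
    intro m
    have hsub : Summable fun k => ε (k + N) := (summable_nat_add_iff N).2 hε
    calc ∑ i ∈ Finset.range m, ε (N + i)
        = ∑ i ∈ Finset.range m, ε (i + N) := by
          refine Finset.sum_congr rfl fun i _ => by rw [add_comm]
      _ ≤ ∑' k, ε (k + N) := Summable.sum_le_tsum _ (fun i _ => hε0 _) hsub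
      _ ≤ η := hN₂ N hN2N
  have key : ∀ k, a (N + k) ≤ (∏ i ∈ Finset.range k, (1 - δ (N + i))) * a N + η
      + ∑ i ∈ Finset.range k, ε (N + i) := by
    intro k
    induction k with
    | zero => simp; linarith [hη.le]
    | succ k ih =>
      have h1 : 0 ≤ 1 - δ (N + k) := by linarith [hδ1 (N + k)]
      have hP0 : 0 ≤ ∏ i ∈ Finset.range k, (1 - δ (N + i)) :=
        Finset.prod_nonneg fun i _ => by linarith [hδ1 (N + i)]
      have hE0 : 0 ≤ ∑ i ∈ Finset.range k, ε (N + i) :=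
        Finset.sum_nonneg fun i _ => hε0 _
      have hσk : σ (N + k) ≤ η := hN₁ _ (le_trans hN1N (Nat.le_add_right _ _))
      have hr := hrec (N + k)
      have : a (N + (k + 1)) = a ((N + k) + 1) := by ring_nf
      rw [this, Finset.prod_range_succ, Finset.sum_range_succ]
      have step1 : a ((N + k) + 1) ≤ (1 - δ (N + k)) * a (N + k) + δ (N + k) * η + ε (N + k) := by
        have := mul_le_mul_of_nonneg_left hσk (hδ0 (N + k))
        linarith
      have step2 : (1 - δ (N + k)) * a (N + k) ≤
          (1 - δ (N + k)) * ((∏ i ∈ Finset.range k, (1 - δ (N + i))) * a N + η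
            + ∑ i ∈ Finset.range k, ε (N + i)) :=
        mul_le_mul_of_nonneg_left ih h1
      have hδk := hδ0 (N + k)
      have hδk1 := hδ1 (N + k)
      have haN := ha0 N
      nlinarith [mul_nonneg hP0 haN, mul_nonneg hδk hE0, mul_nonneg hδk (mul_nonneg hP0 haN)]
  have hprod : Tendsto (fun k => (∏ i ∈ Finset.range k, (1 - δ (N + i))) * a N) atTop (nhds 0) := by
    have hPle : ∀ k, ∏ i ∈ Finset.range k, (1 - δ (N + i)) ≤
        Real.exp (-(∑ i ∈ Finset.range k, δ (N + i))) := by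
      intro k
      induction k with
      | zero => simp
      | succ k ih =>
        rw [Finset.prod_range_succ, Finset.sum_range_succ, neg_add, Real.exp_add]
        have h1 : 0 ≤ 1 - δ (N + k) := by linarith [hδ1 (N + k)]
        have h2 : (1 - δ (N + k)) ≤ Real.exp (-(δ (N + k))) := by
          have := Real.add_one_le_exp (-(δ (N + k))); linarith
        have hP0 : 0 ≤ ∏ i ∈ Finset.range k, (1 - δ (N + i)) :=
          Finset.prod_nonneg fun i _ => by linarith [hδ1 (N + i)]
        exact mul_le_mul ih h2 h1 (Real.exp_nonneg _)
    have hsum : Tendsto (fun k => ∑ i ∈ Finset.range k, δ (N + i)) atTop atTop := by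
      have hid : ∀ k, ∑ i ∈ Finset.range k, δ (N + i)
          = (∑ i ∈ Finset.range (N + k), δ i) - ∑ i ∈ Finset.range N, δ i := by
        intro k; rw [Finset.sum_range_add]; ring
      simp only [hid, sub_eq_add_neg]
      have h1 : Tendsto (fun k => ∑ i ∈ Finset.range (N + k), δ i) atTop atTop := by
        have h2 := hδdiv.comp (tendsto_add_atTop_nat N)
        simpa [Function.comp_def, Nat.add_comm] using h2
      exact tendsto_atTop_add_const_right atTop _ h1
    have hexp : Tendsto (fun k => Real.exp (-(∑ i ∈ Finset.range k, δ (N + i)))) atTop (nhds 0) :=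
      Real.tendsto_exp_atBot.comp (tendsto_neg_atBot_iff.mpr hsum)
    have hP0 : ∀ k, 0 ≤ ∏ i ∈ Finset.range k, (1 - δ (N + i)) :=
      fun k => Finset.prod_nonneg fun i _ => by linarith [hδ1 (N + i)]
    have hPz : Tendsto (fun k => ∏ i ∈ Finset.range k, (1 - δ (N + i))) atTop (nhds 0) :=
      squeeze_zero hP0 hPle hexp
    simpa using hPz.mul_const (a N)
  obtain ⟨K, hK⟩ := eventually_atTop.mp (hprod.eventually (eventually_le_nhds hη))
  refine ⟨N + K, fun n hn => ?_⟩
  have hkn : n = N + (n - N) := by omega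
  have hKn : K ≤ n - N := by omega
  have h3 : a n ≤ η + η + η := by
    rw [hkn]
    calc a (N + (n - N)) ≤ _ := key (n - N)
      _ ≤ η + η + η := by
          have := hK (n - N) hKn
          have := htail (n - N)
          linarith
  rw [Real.dist_eq, sub_zero, abs_of_nonneg (ha0 n)]
  linarith

/-- Asymptotic-center argument: a bounded sequence which is asymptotically fixed by a
nonexpansive map `T` admits an asymptotic center `q` which is a fixed point of `T` and
such that `⟪u k - q, v⟫ ≤ ε` frequently, for every `v` and every `ε > 0`. -/
lemma asymptotic_center {H : Type*} [NormedAddCommGroup H] [InnerProductSpace ℝ H]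
    [CompleteSpace H]
    (u : ℕ → H) (C : ℝ) (hC : ∀ k, ‖u k‖ ≤ C)
    (T : H → H) (hT : ∀ a b, ‖T a - T b‖ ≤ ‖a - b‖)
    (hr : Tendsto (fun k => ‖u k - T (u k)‖) atTop (nhds 0)) :
    ∃ q : H, T q = q ∧ ∀ v : H, ∀ ε > (0:ℝ), ∃ᶠ k in atTop, ⟪u k - q, v⟫ ≤ ε := by
  classical
  have hC0 : 0 ≤ C := (norm_nonneg (u 0)).trans (hC 0)
  set φ : H → ℝ := fun z => limsup (fun k => ‖u k - z‖ ^ 2) atTop with hφdef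
  have hub : ∀ z k, ‖u k - z‖ ^ 2 ≤ (C + ‖z‖) ^ 2 := by
    intro z k
    have h1 : ‖u k - z‖ ≤ C + ‖z‖ := (norm_sub_le _ _).trans (by linarith [hC k])
    have h0 : (0:ℝ) ≤ ‖u k - z‖ := norm_nonneg _
    nlinarith
  have hbdd : ∀ z, IsBoundedUnder (· ≤ ·) atTop (fun k => ‖u k - z‖ ^ 2) :=
    fun z => isBoundedUnder_of ⟨(C + ‖z‖) ^ 2, fun k => hub z k⟩
  have hcob : ∀ z, IsCoboundedUnder (· ≤ ·) atTop (fun k => ‖u k - z‖ ^ 2) :=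
    fun z => isCoboundedUnder_le_of_le atTop (fun k => sq_nonneg _)
  have F1 : ∀ z c, (∀ᶠ k in atTop, ‖u k - z‖ ^ 2 ≤ c) → φ z ≤ c :=
    fun z c h => limsup_le_of_le (hcob z) h
  have F2 : ∀ z, ∀ ε > (0:ℝ), ∀ᶠ k in atTop, ‖u k - z‖ ^ 2 ≤ φ z + ε := by
    intro z ε hε
    have := eventually_lt_of_limsup_lt (f := atTop) (u := fun k => ‖u k - z‖ ^ 2)
      (b := φ z + ε) (by linarith [le_refl (φ z)] : φ z < φ z + ε) (hbdd z)
    exact this.mono fun k hk => hk.le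
  have F3 : ∀ z, 0 ≤ φ z := fun z =>
    le_limsup_of_frequently_le (Eventually.of_forall fun k => sq_nonneg _).frequently (hbdd z)
  have hconv : ∀ z w : H, φ ((1/2 : ℝ) • z + (1/2 : ℝ) • w)
      ≤ φ z / 2 + φ w / 2 - ‖z - w‖ ^ 2 / 4 := by
    intro z w
    refine le_of_forall_pos_le_add fun ε hε => ?_
    refine F1 _ _ ?_
    filter_upwards [F2 z (ε/2) (by linarith), F2 w (ε/2) (by linarith)] with k h1 h2
    have hid : u k - ((1/2 : ℝ) • z + (1/2 : ℝ) • w)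
        = (1/2 : ℝ) • (u k - z) + (1 - (1/2 : ℝ)) • (u k - w) := by
      norm_num
      module
    rw [hid, norm_convex_comb_sq]
    have h3 : ‖(u k - z) - (u k - w)‖ = ‖z - w‖ := by
      rw [show (u k - z) - (u k - w) = w - z by abel, norm_sub_rev]
    rw [h3]
    norm_num
    linarith
  have hbdd_below : BddBelow (Set.range φ) := ⟨0, by rintro _ ⟨z, rfl⟩; exact F3 z⟩
  set m := ⨅ z, φ z with hmdef
  have hm_le : ∀ z, m ≤ φ z := fun z => ciInf_le hbdd_below z
  have hmin_seq : ∀ k : ℕ, ∃ z, φ z < m + 1/(k+1) := by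
    intro k
    apply exists_lt_of_ciInf_lt
    have : (0:ℝ) < 1/((k:ℝ)+1) := by positivity
    linarith
  choose zs hzs using hmin_seq
  have hcauchy : CauchySeq zs := by
    rw [Metric.cauchySeq_iff]
    intro ε hε
    obtain ⟨J, hJ⟩ : ∃ J : ℕ, (4:ℝ)*(1/((J:ℝ)+1)) < ε^2 := by
      obtain ⟨J, hJ⟩ := exists_nat_gt (4/ε^2)
      refine ⟨J, ?_⟩
      rw [mul_one_div, div_lt_iff₀ (by positivity)]
      have h4 : (0:ℝ) < ε^2 := by positivity
      have : 4/ε^2 * ε^2 = 4 := by field_simp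
      nlinarith
    refine ⟨J, fun j hj k hk => ?_⟩
    have h1 := hconv (zs j) (zs k)
    have h2 := hm_le ((1/2 : ℝ) • zs j + (1/2 : ℝ) • zs k)
    have h3 := hzs j
    have h4 := hzs k
    have h5 : 1/((j:ℝ)+1) ≤ 1/((J:ℝ)+1) := by
      apply one_div_le_one_div_of_le (by positivity)
      have : (J:ℝ) ≤ (j:ℝ) := Nat.cast_le.mpr hj
      linarith
    have h6 : 1/((k:ℝ)+1) ≤ 1/((J:ℝ)+1) := by
      apply one_div_le_one_div_of_le (by positivity)
      have : (J:ℝ) ≤ (k:ℝ) := Nat.cast_le.mpr hk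
      linarith
    have h7 : ‖zs j - zs k‖^2 < 4*(1/((J:ℝ)+1)) := by linarith
    rw [dist_eq_norm]
    nlinarith [norm_nonneg (zs j - zs k), hε]
  obtain ⟨q, hq⟩ := cauchySeq_tendsto_of_complete hcauchy
  have hφqm : φ q ≤ m := by
    refine le_of_forall_pos_le_add fun ε hε => ?_
    set D := 2*(C + ‖q‖ + 1) + 1 with hDdef
    have hD : 0 < D := by rw [hDdef]; linarith [norm_nonneg q]
    clear_value D
    have hzq : Tendsto (fun k => ‖zs k - q‖) atTop (nhds 0) := by
      have h := (hq.sub (tendsto_const_nhds (x := q))).norm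
      simpa using h
    have h1 : ∀ᶠ k in atTop, ‖zs k - q‖ ≤ min 1 (ε/3 / D) :=
      hzq.eventually (eventually_le_nhds (lt_min one_pos (div_pos (by linarith) hD)))
    have h2 : ∀ᶠ k : ℕ in atTop, 1/((k:ℝ)+1) ≤ ε/3 :=
      tendsto_one_div_add_atTop_nhds_zero_nat.eventually (eventually_le_nhds (by linarith))
    obtain ⟨k, hk1, hk2⟩ := (h1.and h2).exists
    have hk1a : ‖zs k - q‖ ≤ 1 := hk1.trans (min_le_left _ _)
    have hk1b : ‖zs k - q‖ ≤ ε/3 / D := hk1.trans (min_le_right _ _)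
    have hφq_le : φ q ≤ φ (zs k) + 2*(ε/3) := by
      refine F1 _ _ ?_
      filter_upwards [F2 (zs k) (ε/3) (by linarith)] with i hi
      have ht : ‖u i - q‖ ≤ ‖u i - zs k‖ + ‖zs k - q‖ := by
        have : u i - q = (u i - zs k) + (zs k - q) := by abel
        rw [this]; exact norm_add_le _ _
      have hC' : ‖u i - zs k‖ ≤ C + ‖q‖ + 1 := by
        have := norm_sub_le (u i) (zs k)
        have h8 : ‖zs k‖ ≤ ‖q‖ + 1 := by
          have : ‖zs k‖ - ‖q‖ ≤ ‖zs k - q‖ := by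
            have := norm_sub_norm_le (zs k) q
            simpa using this
          linarith
        linarith [hC i]
      have hsq : ‖u i - q‖^2 ≤ (‖u i - zs k‖ + ‖zs k - q‖)^2 :=
        pow_le_pow_left₀ (norm_nonneg _) ht 2
      have hrD : ‖zs k - q‖ * D ≤ ε/3 := by
        have h9 := mul_le_mul_of_nonneg_right hk1b hD.le
        have h10 : ε/3/D*D = ε/3 := div_mul_cancel₀ _ (ne_of_gt hD)
        linarith
      have hexp : (‖u i - zs k‖ + ‖zs k - q‖)^2
          ≤ ‖u i - zs k‖^2 + ‖zs k - q‖ * D := by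
        rw [hDdef]
        nlinarith [norm_nonneg (zs k - q), norm_nonneg (u i - zs k),
          mul_le_mul_of_nonneg_left hC' (norm_nonneg (zs k - q)),
          mul_le_mul_of_nonneg_left hk1a (norm_nonneg (zs k - q))]
      linarith
    have := hzs k
    calc φ q ≤ φ (zs k) + 2*(ε/3) := hφq_le
      _ ≤ m + 1/((k:ℝ)+1) + 2*(ε/3) := by linarith
      _ ≤ m + ε := by linarith
  have hφq : ∀ z, φ q ≤ φ z := fun z => hφqm.trans (hm_le z)
  have hTq_le : φ (T q) ≤ φ q := by
    refine le_of_forall_pos_le_add fun ε hε => ?_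
    set D0 := C + ‖q‖ with hD0def
    clear_value D0
    have hcv : Tendsto (fun i => ‖u i - T (u i)‖ * (‖u i - T (u i)‖ + 2*D0)) atTop (nhds 0) := by
      have h := hr.mul (hr.add (show Tendsto (fun _ : ℕ => 2*D0) atTop (nhds (2*D0)) from
        tendsto_const_nhds))
      simpa using h
    refine F1 _ _ ?_
    filter_upwards [F2 q (ε/2) (by linarith),
      hcv.eventually (eventually_le_nhds (show (0:ℝ) < ε/2 by linarith))] with i h1 h2
    have ha : ‖u i - T q‖ ≤ ‖u i - T (u i)‖ + ‖u i - q‖ := by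
      have hd : u i - T q = (u i - T (u i)) + (T (u i) - T q) := by abel
      rw [hd]
      exact (norm_add_le _ _).trans (by linarith [hT (u i) q])
    have hdD : ‖u i - q‖ ≤ D0 := (norm_sub_le _ _).trans (by rw [hD0def]; linarith [hC i])
    have hsq : ‖u i - T q‖^2 ≤ (‖u i - T (u i)‖ + ‖u i - q‖)^2 :=
      pow_le_pow_left₀ (norm_nonneg _) ha 2
    nlinarith [norm_nonneg (u i - T (u i)), norm_nonneg (u i - q)]
  have hfix : T q = q := by
    have h1 := hconv q (T q)
    have h2 : φ q ≤ φ ((1/2:ℝ) • q + (1/2:ℝ) • T q) := hφq _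
    have h3 : ‖q - T q‖ ^ 2 ≤ 0 := by linarith
    have h4 : ‖q - T q‖ = 0 := by nlinarith [norm_nonneg (q - T q)]
    have h5 : q - T q = 0 := norm_eq_zero.mp h4
    exact (sub_eq_zero.mp h5).symm
  refine ⟨q, hfix, ?_⟩
  intro v ε hε
  by_contra hcon
  rw [not_frequently] at hcon
  push_neg at hcon
  rcases eq_or_ne v 0 with hv | hv
  · obtain ⟨k, hk⟩ := hcon.exists
    rw [hv, inner_zero_right] at hk
    linarith
  · have hvn : (0:ℝ) < ‖v‖^2 := pow_pos (norm_pos_iff.mpr hv) 2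
    set t := ε / ‖v‖^2 with htdef
    have ht : 0 < t := div_pos hε hvn
    clear_value t
    set ε' := ε^2 / (2 * ‖v‖^2) with hε'def
    have hε' : 0 < ε' := by rw [hε'def]; positivity
    clear_value ε'
    have hkey : φ (q + t • v) ≤ φ q - ε' := by
      refine F1 _ _ ?_
      filter_upwards [F2 q ε' hε', hcon] with k h1 h2
      have hid : u k - (q + t • v) = (u k - q) - t • v := by abel
      rw [hid, norm_sub_smul_sq]
      have : 2 * t * ⟪u k - q, v⟫ ≥ 2 * t * ε := by
        apply mul_le_mul_of_nonneg_left h2.le (by linarith)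
      have ht2 : t^2 * ‖v‖^2 = ε^2/‖v‖^2 := by
        rw [htdef]; field_simp
      have ht3 : 2 * t * ε = 2 * (ε^2/‖v‖^2) := by
        rw [htdef]; field_simp
      have hε'2 : ε' = ε^2/(2*‖v‖^2) := hε'def
      have : ‖u k - q‖^2 - 2*t*⟪u k - q, v⟫ + t^2*‖v‖^2 ≤ φ q + ε' - 2*(ε^2/‖v‖^2) + ε^2/‖v‖^2 := by
        linarith
      calc ‖u k - q‖^2 - 2*t*⟪u k - q, v⟫ + t^2*‖v‖^2
          ≤ φ q + ε' - ε^2/‖v‖^2 := by linarith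
        _ ≤ φ q - ε' := by
            rw [hε'2]
            have : ε^2/(2*‖v‖^2) + ε^2/(2*‖v‖^2) = ε^2/‖v‖^2 := by field_simp; ring
            linarith
    have := hφq (q + t • v)
    linarith

section OperatorLemmas
variable {H : Type*} [NormedAddCommGroup H] [InnerProductSpace ℝ H]

lemma resolvent_firm {A : H → Set H} (hA : MonotoneOp A) {γ : ℝ} (hγ : 0 < γ)
    {J : H → H} (hJ : ∀ x : H, x - J x ∈ γ • A (J x)) (u v : H) :
    ‖J u - J v‖^2 ≤ ⟪J u - J v, u - v⟫ := by
  obtain ⟨a, ha, hae⟩ := Set.mem_smul_set.mp (hJ u)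
  obtain ⟨b, hb, hbe⟩ := Set.mem_smul_set.mp (hJ v)
  have hmon := hA (J u) (J v) a b ha hb
  have hab : a - b = γ⁻¹ • ((u - J u) - (v - J v)) := by
    rw [← hae, ← hbe, smul_sub, smul_smul, smul_smul, inv_mul_cancel₀ (ne_of_gt hγ), one_smul,
      one_smul]
  rw [hab] at hmon
  rw [real_inner_smul_right] at hmon
  have hsplit : ⟪J u - J v, (u - J u) - (v - J v)⟫
      = ⟪J u - J v, u - v⟫ - ‖J u - J v‖^2 := by
    have hid : (u - J u) - (v - J v) = (u - v) - (J u - J v) := by abel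
    rw [hid, inner_sub_right, real_inner_self_eq_norm_sq]
  rw [hsplit] at hmon
  have hγi : 0 < γ⁻¹ := inv_pos.mpr hγ
  nlinarith

/-- Averagedness inequality for `T = J ∘ (Id - γ B)`. -/
lemma forward_backward_averaged {A : H → Set H} (hA : MonotoneOp A)
    {βc : ℝ} (hβc : 0 < βc) {B : H → H}
    (hB : ∀ x y : H, βc * ‖B x - B y‖ ^ 2 ≤ ⟪x - y, B x - B y⟫)
    {γ : ℝ} (hγ : 0 < γ)
    {J : H → H} (hJ : ∀ x : H, x - J x ∈ γ • A (J x)) (u v : H) :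
    2*βc*‖J (u - γ • B u) - J (v - γ • B v)‖^2
      ≤ 2*βc*‖u - v‖^2
        - (2*βc - γ) * ‖(J (u - γ • B u) - J (v - γ • B v)) - (u - v)‖^2 := by
  set t := J (u - γ • B u) - J (v - γ • B v) with htdef
  set d := u - v with hddef
  set bd := B u - B v with hbddef
  set w := t - d with hwdef
  have hfirm := resolvent_firm hA hγ hJ (u - γ • B u) (v - γ • B v)
  have hsub : (u - γ • B u) - (v - γ • B v) = d - γ • bd := by
    rw [hddef, hbddef, smul_sub]; abel
  rw [hsub] at hfirm
  rw [inner_sub_right, real_inner_smul_right] at hfirm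
  have hcoco := hB u v
  have hsplit : ⟪t, bd⟫ = ⟪d, bd⟫ + ⟪w, bd⟫ := by
    have : t = d + w := by rw [hwdef]; abel
    rw [this, inner_add_left]
  have hcs : -⟪w, bd⟫ ≤ ‖w‖ * ‖bd‖ :=
    (neg_le_abs _).trans (abs_real_inner_le_norm w bd)
  have hamgm : 4*βc*(‖w‖ * ‖bd‖) ≤ 4*βc^2*‖bd‖^2 + ‖w‖^2 := by
    nlinarith [sq_nonneg (‖w‖ - 2*βc*‖bd‖)]
  have hnorm : ‖w‖^2 = ‖t‖^2 - 2*⟪t, d⟫ + ‖d‖^2 := by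
    rw [hwdef]
    have := norm_sub_sq_real t d
    linarith
  have h1 : 4*βc*γ*(-⟪w, bd⟫) ≤ γ*(4*βc*(‖w‖ * ‖bd‖)) := by
    have := mul_le_mul_of_nonneg_left hcs (by positivity : (0:ℝ) ≤ 4*βc*γ)
    nlinarith
  have h2 : γ*(4*βc*(‖w‖ * ‖bd‖)) ≤ γ*(4*βc^2*‖bd‖^2 + ‖w‖^2) :=
    mul_le_mul_of_nonneg_left hamgm hγ.le
  have h3 : 4*βc*γ*(βc*‖bd‖^2) ≤ 4*βc*γ*⟪d, bd⟫ :=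
    mul_le_mul_of_nonneg_left hcoco (by positivity)
  have h4 : 4*βc*‖t‖^2 ≤ 4*βc*(⟪t, d⟫ - γ*⟪t, bd⟫) :=
    mul_le_mul_of_nonneg_left hfirm (by positivity)
  have c2 : 4*βc*γ*⟪t, bd⟫ = 4*βc*γ*⟪d, bd⟫ + 4*βc*γ*⟪w, bd⟫ := by rw [hsplit]; ring
  have c3 : 4*βc^2*γ*‖bd‖^2 ≤ 4*βc*γ*⟪d, bd⟫ := by nlinarith [h3]
  have c4 : -(4*βc*γ*⟪w, bd⟫) ≤ 4*βc^2*γ*‖bd‖^2 + γ*‖w‖^2 := by nlinarith [h1, h2]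
  have c5 : 4*βc*⟪t, d⟫ = 2*βc*‖t‖^2 + 2*βc*‖d‖^2 - 2*βc*‖w‖^2 := by
    rw [hnorm]; ring
  have c1 : 4*βc*‖t‖^2 ≤ 4*βc*⟪t, d⟫ - 4*βc*γ*⟪t, bd⟫ := by nlinarith [h4]
  linarith [c1, c2, c3, c4, c5]

/-- The relaxed operator is nonexpansive for relaxation parameters `λ` with
`2 βc λ ≤ 4 βc - γ`. -/
lemma relax_nonexp {A : H → Set H} (hA : MonotoneOp A)
    {βc : ℝ} (hβc : 0 < βc) {B : H → H}
    (hB : ∀ x y : H, βc * ‖B x - B y‖ ^ 2 ≤ ⟪x - y, B x - B y⟫)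
    {γ : ℝ} (hγ : 0 < γ)
    {J : H → H} (hJ : ∀ x : H, x - J x ∈ γ • A (J x))
    {lam : ℝ} (hl0 : 0 ≤ lam) (hl1 : 2*βc*lam ≤ 4*βc - γ) (u v : H) :
    ‖((1-lam) • u + lam • J (u - γ • B u)) - ((1-lam) • v + lam • J (v - γ • B v))‖
      ≤ ‖u - v‖ := by
  have havg := forward_backward_averaged hA hβc hB hγ hJ u v
  set t := J (u - γ • B u) - J (v - γ • B v) with htdef
  set d := u - v with hddef
  set w := t - d with hwdef
  have htdw : t = d + w := by rw [hwdef]; abel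
  have hexp : ‖t‖^2 = ‖d‖^2 + 2*⟪d,w⟫ + ‖w‖^2 := by
    rw [htdw, norm_add_sq_real]
  have c : 2*βc*‖t‖^2 = 2*βc*‖d‖^2 + 4*βc*⟪d,w⟫ + 2*βc*‖w‖^2 := by rw [hexp]; ring
  have e1 : 4*βc*⟪d,w⟫ ≤ -((4*βc - γ)*‖w‖^2) := by linarith [havg, c]
  have e2 : lam*(4*βc*⟪d,w⟫) ≤ lam*(-((4*βc-γ)*‖w‖^2)) :=
    mul_le_mul_of_nonneg_left e1 hl0
  have e3 : lam*(2*βc*lam*‖w‖^2) ≤ lam*((4*βc-γ)*‖w‖^2) :=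
    mul_le_mul_of_nonneg_left (mul_le_mul_of_nonneg_right hl1 (sq_nonneg ‖w‖)) hl0
  have hRd : ((1-lam) • u + lam • J (u - γ • B u)) - ((1-lam) • v + lam • J (v - γ • B v))
      = d + lam • w := by
    rw [hwdef, htdef, hddef]
    module
  rw [hRd]
  have hRexp : ‖d + lam • w‖^2 = ‖d‖^2 + 2*lam*⟪d,w⟫ + lam^2*‖w‖^2 := by
    rw [norm_add_sq_real, real_inner_smul_right, norm_smul, Real.norm_eq_abs, mul_pow, sq_abs]
    ring
  have c2 : 2*βc*‖d + lam • w‖^2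
      = 2*βc*‖d‖^2 + lam*(4*βc*⟪d,w⟫) + lam*(2*βc*lam*‖w‖^2) := by
    rw [hRexp]; ring
  have goal_sq : 2*βc*‖d + lam • w‖^2 ≤ 2*βc*‖d‖^2 := by nlinarith [e2, e3, c2]
  have goal_sq' : ‖d + lam • w‖^2 ≤ ‖d‖^2 :=
    (mul_le_mul_iff_right₀ (by positivity : (0:ℝ) < 2*βc)).mp goal_sq
  exact norm_le_of_sq_le_sq goal_sq' (norm_nonneg _) (norm_nonneg _)

/-- A zero of `A + B` is a fixed point of the forward-backward operator. -/
lemma fixed_of_zero {A : H → Set H} (hA : MonotoneOp A) {B : H → H}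
    {γ : ℝ} (hγ : 0 < γ)
    {J : H → H} (hJ : ∀ x : H, x - J x ∈ γ • A (J x))
    (z : H) (hz : -B z ∈ A z) : J (z - γ • B z) = z := by
  set u' := z - γ • B z with hu'def
  obtain ⟨a, ha, hae⟩ := Set.mem_smul_set.mp (hJ u')
  have hmon := hA (J u') z a (-B z) ha hz
  have key : γ • (a - (-B z)) = z - J u' := by
    rw [smul_sub, hae, hu'def, smul_neg]
    abel
  have hab : a - (-B z) = γ⁻¹ • (z - J u') := by
    rw [← key, smul_smul, inv_mul_cancel₀ (ne_of_gt hγ), one_smul]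
  rw [hab, real_inner_smul_right, show z - J u' = -(J u' - z) by abel, inner_neg_right,
    real_inner_self_eq_norm_sq] at hmon
  have hγi : 0 < γ⁻¹ := inv_pos.mpr hγ
  have h0 : ‖J u' - z‖^2 ≤ 0 := by nlinarith
  have h1 : ‖J u' - z‖ = 0 := by nlinarith [norm_nonneg (J u' - z)]
  exact sub_eq_zero.mp (norm_eq_zero.mp h1)

/-- A fixed point of the forward-backward operator is a zero of `A + B`. -/
lemma zero_of_fixed {A : H → Set H} {B : H → H}
    {γ : ℝ} (hγ : 0 < γ)
    {J : H → H} (hJ : ∀ x : H, x - J x ∈ γ • A (J x))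
    (z : H) (hz : J (z - γ • B z) = z) : -B z ∈ A z := by
  have h := hJ (z - γ • B z)
  rw [hz] at h
  have hid : (z - γ • B z) - z = γ • (-B z) := by rw [smul_neg]; abel
  rw [hid] at h
  obtain ⟨a, ha, hae⟩ := Set.mem_smul_set.mp h
  have : a = -B z := smul_right_injective H (ne_of_gt hγ) hae
  rwa [← this]

end OperatorLemmas

/-- Strong convergence of the forward-backward algorithm with Tikhonov
regularization terms
`x (n+1) = (1 - λ n) • β n • x n + λ n • J (β n • x n - γ • B (β n • x n))`
to the minimal norm zero of `A + B`, where `A` is maximally monotone, `B` is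
`β`-cocoercive, `γ ∈ (0, 2β]` and `J = J_{γA}` is the resolvent of `γ A`,
characterized by `x - J x ∈ γ • A (J x)`.  The set of zeros of `A + B` is
`{x | -B x ∈ A x}` and `p` is its minimal norm element. -/
theorem forwardBackward_tikhonov_strong_convergence
    {H : Type*} [NormedAddCommGroup H] [InnerProductSpace ℝ H] [CompleteSpace H]
    (A : H → Set H) (hA : MaximallyMonotoneOp A)
    (βc : ℝ) (hβc : 0 < βc)
    (B : H → H) (hB : ∀ x y : H, βc * ‖B x - B y‖ ^ 2 ≤ ⟪x - y, B x - B y⟫)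
    (γ : ℝ) (hγ : γ ∈ Set.Ioc 0 (2 * βc))
    (J : H → H) (hJ : ∀ x : H, x - J x ∈ γ • A (J x))
    (hzer_ne : {z : H | -B z ∈ A z}.Nonempty)
    (β lam : ℕ → ℝ)
    (hβ : ∀ n, 0 < β n ∧ β n ≤ 1)
    (hβlim : Tendsto β atTop (nhds 1))
    (hβdiv : ¬ Summable (fun n => 1 - β n))
    (hβvar : Summable (fun n => |β (n + 1) - β n|))
    (hlam : ∀ n, 0 < lam n ∧ lam n ≤ (4 * βc - γ) / (2 * βc))
    (hlaminf : 0 < Filter.liminf lam Filter.atTop)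
    (hlamvar : Summable (fun n => |lam (n + 1) - lam n|))
    (x : ℕ → H)
    (hiter : ∀ n, x (n + 1) =
      (1 - lam n) • (β n • x n) + lam n • J (β n • x n - γ • B (β n • x n)))
    (p : H) (hp : -B p ∈ A p) (hpmin : ∀ q : H, -B q ∈ A q → ‖p‖ ≤ ‖q‖) :
    Tendsto x atTop (nhds p) := by
  obtain ⟨hγ0, hγ2⟩ := hγ
  obtain ⟨z₀, hz₀⟩ := hzer_ne
  set T : H → H := fun z => J (z - γ • B z) with hTdef
  have hTz₀ : T z₀ = z₀ := fixed_of_zero hA.1 hγ0 hJ z₀ hz₀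
  have hTp : T p = p := fixed_of_zero hA.1 hγ0 hJ p hp
  have hlam' : ∀ n, 0 ≤ lam n ∧ 2*βc*(lam n) ≤ 4*βc - γ := by
    intro n
    refine ⟨(hlam n).1.le, ?_⟩
    have h2 := (hlam n).2
    calc 2*βc*lam n ≤ 2*βc*((4*βc-γ)/(2*βc)) := mul_le_mul_of_nonneg_left h2 (by positivity)
      _ = 4*βc - γ := by field_simp
  have hR : ∀ (l : ℝ), 0 ≤ l → 2*βc*l ≤ 4*βc - γ → ∀ u v : H,
      ‖((1-l) • u + l • T u) - ((1-l) • v + l • T v)‖ ≤ ‖u - v‖ := by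
    intro l hl0 hl1 u v
    exact relax_nonexp hA.1 hβc hB hγ0 hJ hl0 hl1 u v
  have hTnonexp : ∀ u v : H, ‖T u - T v‖ ≤ ‖u - v‖ := by
    intro u v
    have h := hR 1 zero_le_one (by linarith) u v
    simpa using h
  have hRfix : ∀ (l : ℝ) (z : H), T z = z → (1-l) • z + l • T z = z := by
    intro l z hz
    rw [hz]; module
  set M₀ : ℝ := max ‖x 0 - z₀‖ ‖z₀‖ with hM₀def
  have hM₀0 : 0 ≤ M₀ := le_trans (norm_nonneg _) (le_max_left _ _)
  have hz₀M₀ : ‖z₀‖ ≤ M₀ := le_max_right _ _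
  have hy_est : ∀ n (z : H), ‖β n • x n - z‖ ≤ β n * ‖x n - z‖ + (1 - β n) * ‖z‖ := by
    intro n z
    have hid : β n • x n - z = β n • (x n - z) + (β n - 1) • z := by module
    rw [hid]
    refine (norm_add_le _ _).trans ?_
    rw [norm_smul, norm_smul, Real.norm_eq_abs, Real.norm_eq_abs,
      abs_of_pos (hβ n).1, abs_of_nonpos (by linarith [(hβ n).2] : β n - 1 ≤ 0)]
    have : -(β n - 1) = 1 - β n := by ring
    rw [this]
  -- boundedness of the trajectory
  have hbound : ∀ n, ‖x n - z₀‖ ≤ M₀ := by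
    intro n
    induction n with
    | zero => exact le_max_left _ _
    | succ n ih =>
      have h1 : x (n+1) = ((1 - lam n) • (β n • x n) + lam n • T (β n • x n)) := hiter n
      have h2 : ‖x (n+1) - z₀‖ ≤ ‖β n • x n - z₀‖ := by
        rw [h1]
        calc ‖((1 - lam n) • (β n • x n) + lam n • T (β n • x n)) - z₀‖
            = ‖((1 - lam n) • (β n • x n) + lam n • T (β n • x n))
                - ((1 - lam n) • z₀ + lam n • T z₀)‖ := by rw [hRfix (lam n) z₀ hTz₀]
          _ ≤ ‖β n • x n - z₀‖ := hR (lam n) (hlam' n).1 (hlam' n).2 _ _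
      have h3 := hy_est n z₀
      have hβn := hβ n
      nlinarith [hβn.1.le, hβn.2, ih, hz₀M₀]
  set M : ℝ := M₀ + ‖z₀‖ with hMdef
  have hxM : ∀ n, ‖x n‖ ≤ M := by
    intro n
    calc ‖x n‖ = ‖(x n - z₀) + z₀‖ := by rw [sub_add_cancel]
      _ ≤ ‖x n - z₀‖ + ‖z₀‖ := norm_add_le _ _
      _ ≤ M := by rw [hMdef]; linarith [hbound n]
  have hM0 : 0 ≤ M := (norm_nonneg (x 0)).trans (hxM 0)
  have hyM : ∀ n, ‖β n • x n‖ ≤ M := by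
    intro n
    rw [norm_smul, Real.norm_eq_abs, abs_of_pos (hβ n).1]
    nlinarith [hxM n, (hβ n).1.le, (hβ n).2, norm_nonneg (x n)]
  have hyz₀ : ∀ n, ‖β n • x n - z₀‖ ≤ M₀ := by
    intro n
    have h3 := hy_est n z₀
    nlinarith [hbound n, hz₀M₀, (hβ n).1.le, (hβ n).2, hM₀0]
  have hTyy : ∀ n, ‖T (β n • x n) - β n • x n‖ ≤ 2*M₀ := by
    intro n
    have hid : T (β n • x n) - β n • x n = (T (β n • x n) - T z₀) + (z₀ - β n • x n) := by
      rw [hTz₀]; abel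
    rw [hid]
    refine (norm_add_le _ _).trans ?_
    have h1 : ‖T (β n • x n) - T z₀‖ ≤ M₀ := (hTnonexp _ _).trans (hyz₀ n)
    have h2 : ‖z₀ - β n • x n‖ ≤ M₀ := by rw [norm_sub_rev]; exact hyz₀ n
    linarith
  -- Step 2 : consecutive differences tend to zero
  have hstep2 : Tendsto (fun n => ‖x (n+1) - x n‖) atTop (nhds 0) := by
    refine xu_lemma (δ := fun n => 1 - β (n+1)) (σ := fun _ => 0)
      (ε := fun n => M * |β (n+1) - β n| + 2*M₀ * |lam (n+1) - lam n|)
      (fun n => norm_nonneg _)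
      (fun n => show (0:ℝ) ≤ 1 - β (n+1) by linarith [(hβ (n+1)).2])
      (fun n => show 1 - β (n+1) ≤ (1:ℝ) by linarith [(hβ (n+1)).1]) ?_ ?_ ?_ ?_ ?_
    · rw [← not_summable_iff_tendsto_nat_atTop_of_nonneg (fun n => by linarith [(hβ (n+1)).2])]
      intro hs
      exact hβdiv ((summable_nat_add_iff 1).mp hs)
    · intro η hη
      exact Eventually.of_forall fun n => hη.le
    · exact (hβvar.mul_left M).add (hlamvar.mul_left (2*M₀))
    · intro n
      positivity
    · intro n
      have e1 : x (n+1+1) = ((1 - lam (n+1)) • (β (n+1) • x (n+1))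
          + lam (n+1) • T (β (n+1) • x (n+1))) := hiter (n+1)
      have e0 : x (n+1) = ((1 - lam n) • (β n • x n) + lam n • T (β n • x n)) := hiter n
      have t1 : ‖((1 - lam (n+1)) • (β (n+1) • x (n+1)) + lam (n+1) • T (β (n+1) • x (n+1)))
          - ((1 - lam (n+1)) • (β n • x n) + lam (n+1) • T (β n • x n))‖
          ≤ ‖β (n+1) • x (n+1) - β n • x n‖ := hR _ (hlam' (n+1)).1 (hlam' (n+1)).2 _ _
      have t2 : ((1 - lam (n+1)) • (β n • x n) + lam (n+1) • T (β n • x n))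
          - ((1 - lam n) • (β n • x n) + lam n • T (β n • x n))
          = (lam (n+1) - lam n) • (T (β n • x n) - β n • x n) := by module
      have t2n : ‖((1 - lam (n+1)) • (β n • x n) + lam (n+1) • T (β n • x n))
          - ((1 - lam n) • (β n • x n) + lam n • T (β n • x n))‖
          ≤ |lam (n+1) - lam n| * (2*M₀) := by
        rw [t2, norm_smul, Real.norm_eq_abs]
        exact mul_le_mul_of_nonneg_left (hTyy n) (abs_nonneg _)
      have t3 : β (n+1) • x (n+1) - β n • x n
          = β (n+1) • (x (n+1) - x n) + (β (n+1) - β n) • x n := by module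
      have t3n : ‖β (n+1) • x (n+1) - β n • x n‖
          ≤ β (n+1) * ‖x (n+1) - x n‖ + |β (n+1) - β n| * M := by
        rw [t3]
        refine (norm_add_le _ _).trans ?_
        rw [norm_smul, norm_smul, Real.norm_eq_abs, Real.norm_eq_abs, abs_of_pos (hβ (n+1)).1]
        have := mul_le_mul_of_nonneg_left (hxM n) (abs_nonneg (β (n+1) - β n))
        linarith
      have hsplit : ‖x (n+1+1) - x (n+1)‖
          ≤ ‖β (n+1) • x (n+1) - β n • x n‖ + |lam (n+1) - lam n| * (2*M₀) := by
        have hd : x (n+1+1) - x (n+1)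
            = (((1 - lam (n+1)) • (β (n+1) • x (n+1)) + lam (n+1) • T (β (n+1) • x (n+1)))
                - ((1 - lam (n+1)) • (β n • x n) + lam (n+1) • T (β n • x n)))
              + (((1 - lam (n+1)) • (β n • x n) + lam (n+1) • T (β n • x n))
                - ((1 - lam n) • (β n • x n) + lam n • T (β n • x n))) := by
          rw [← e1, ← e0]; abel
        rw [hd]
        exact (norm_add_le _ _).trans (by linarith)
      show ‖x (n+1+1) - x (n+1)‖ ≤ (1 - (1 - β (n+1))) * ‖x (n+1) - x n‖
          + (1 - β (n+1)) * 0 + (M * |β (n+1) - β n| + 2*M₀ * |lam (n+1) - lam n|)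
      linarith [hsplit, t3n]
  -- Step 3 : residuals tend to zero
  have h1βM : Tendsto (fun n => (1 - β n) * M) atTop (nhds 0) := by
    have h := ((tendsto_const_nhds (x := (1:ℝ))).sub hβlim).mul_const M
    simpa using h
  have hxy : ∀ n, ‖x n - β n • x n‖ ≤ (1 - β n) * M := by
    intro n
    have hid : x n - β n • x n = (1 - β n) • x n := by module
    rw [hid, norm_smul, Real.norm_eq_abs, abs_of_nonneg (by linarith [(hβ n).2] : (0:ℝ) ≤ 1 - β n)]
    exact mul_le_mul_of_nonneg_left (hxM n) (by linarith [(hβ n).2])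
  obtain ⟨c₀, hc₀pos, hc₀⟩ : ∃ c₀ > (0:ℝ), ∀ᶠ n in atTop, c₀ ≤ lam n := by
    refine ⟨liminf lam atTop / 2, by linarith, ?_⟩
    have hcb : IsBoundedUnder (· ≥ ·) atTop lam :=
      isBoundedUnder_of ⟨0, fun n => (hlam n).1.le⟩
    have h := eventually_lt_of_lt_liminf
      (show liminf lam atTop / 2 < liminf lam atTop by linarith) hcb
    exact h.mono fun n hn => hn.le
  have hstep3 : Tendsto (fun n => ‖β n • x n - T (β n • x n)‖) atTop (nhds 0) := by
    have hkey : ∀ n, lam n • (T (β n • x n) - β n • x n) = x (n+1) - β n • x n := by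
      intro n; rw [hiter n]; module
    have hub : ∀ᶠ n in atTop, ‖β n • x n - T (β n • x n)‖
        ≤ (‖x (n+1) - x n‖ + (1 - β n) * M) / c₀ := by
      filter_upwards [hc₀] with n hn
      have h2 : ‖x (n+1) - β n • x n‖ ≤ ‖x (n+1) - x n‖ + (1 - β n)*M := by
        have hid : x (n+1) - β n • x n = (x (n+1) - x n) + (x n - β n • x n) := by abel
        rw [hid]; exact (norm_add_le _ _).trans (by linarith [hxy n])
      have h3 : lam n * ‖T (β n • x n) - β n • x n‖ = ‖x (n+1) - β n • x n‖ := by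
        rw [← hkey n, norm_smul, Real.norm_eq_abs, abs_of_pos (hlam n).1]
      have h4 : ‖β n • x n - T (β n • x n)‖ = ‖T (β n • x n) - β n • x n‖ := norm_sub_rev _ _
      rw [h4, le_div_iff₀ hc₀pos]
      have h5 : c₀ * ‖T (β n • x n) - β n • x n‖ ≤ lam n * ‖T (β n • x n) - β n • x n‖ :=
        mul_le_mul_of_nonneg_right hn (norm_nonneg _)
      nlinarith [h2, h3, h5]
    refine squeeze_zero' (Eventually.of_forall fun n => norm_nonneg _) hub ?_
    have h6 : Tendsto (fun n => (‖x (n+1) - x n‖ + (1 - β n) * M)) atTop (nhds 0) := by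
      have := hstep2.add h1βM
      simpa using this
    have h7 := h6.div_const c₀
    simpa using h7
  -- Step 4 : main Xu recursion
  have hσev : ∀ η > (0:ℝ), ∀ᶠ n in atTop, ‖p‖^2 - β n * ‖x n‖^2 ≤ η := by
    intro η hη
    by_contra hcon
    rw [not_eventually] at hcon
    push_neg at hcon
    obtain ⟨φ, hφmono, hφ⟩ := extraction_of_frequently_atTop hcon
    have huM : ∀ k, ‖β (φ k) • x (φ k)‖ ≤ M := fun k => hyM (φ k)
    have hur : Tendsto (fun k => ‖β (φ k) • x (φ k) - T (β (φ k) • x (φ k))‖) atTop (nhds 0) :=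
      hstep3.comp hφmono.tendsto_atTop
    obtain ⟨q, hqfix, hqvar⟩ := asymptotic_center (fun k => β (φ k) • x (φ k)) M huM
      T hTnonexp hur
    have hqz : -B q ∈ A q := zero_of_fixed hγ0 hJ q hqfix
    have hpq : ‖p‖ ≤ ‖q‖ := hpmin q hqz
    have hη2 : ∀ k, ‖β (φ k) • x (φ k)‖^2 ≤ ‖p‖^2 - η := by
      intro k
      have h1 : η < ‖p‖^2 - β (φ k) * ‖x (φ k)‖^2 := hφ k
      have h2 : ‖β (φ k) • x (φ k)‖^2 = (β (φ k))^2 * ‖x (φ k)‖^2 := by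
        rw [norm_smul, Real.norm_eq_abs, mul_pow, sq_abs]
      nlinarith [(hβ (φ k)).1, (hβ (φ k)).2, sq_nonneg ‖x (φ k)‖]
    have hp2η : 0 ≤ ‖p‖^2 - η := (sq_nonneg ‖β (φ 0) • x (φ 0)‖).trans (hη2 0)
    set s := Real.sqrt (‖p‖^2 - η) with hsdef
    have hs0 : 0 ≤ s := Real.sqrt_nonneg _
    have hs2 : s^2 = ‖p‖^2 - η := Real.sq_sqrt hp2η
    have hus : ∀ k, ‖β (φ k) • x (φ k)‖ ≤ s := by
      intro k
      refine norm_le_of_sq_le_sq ?_ (norm_nonneg _) hs0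
      rw [hs2]; exact hη2 k
    have hqs : ‖q‖ ≤ s := by
      have hq2 : ∀ ε > (0:ℝ), ‖q‖^2 ≤ s*‖q‖ + ε := by
        intro ε hε
        obtain ⟨k, hk⟩ := (hqvar (-q) ε hε).exists
        have hinner : ⟪β (φ k) • x (φ k) - q, -q⟫ = -⟪β (φ k) • x (φ k), q⟫ + ‖q‖^2 := by
          rw [inner_neg_right, inner_sub_left, real_inner_self_eq_norm_sq]; ring
        rw [hinner] at hk
        have h5 : ⟪β (φ k) • x (φ k), q⟫ ≤ ‖β (φ k) • x (φ k)‖ * ‖q‖ := real_inner_le_norm _ _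
        have h6 : ‖β (φ k) • x (φ k)‖ * ‖q‖ ≤ s * ‖q‖ :=
          mul_le_mul_of_nonneg_right (hus k) (norm_nonneg q)
        linarith
      have h7 : ‖q‖^2 ≤ s*‖q‖ := le_of_forall_pos_le_add hq2
      nlinarith [norm_nonneg q, hs0]
    have h8 : ‖p‖^2 ≤ s^2 := by nlinarith [norm_nonneg p, hpq, hqs, hs0]
    rw [hs2] at h8
    linarith
  have hxu : Tendsto (fun n => ‖x n - p‖^2) atTop (nhds 0) := by
    refine xu_lemma (δ := fun n => 1 - β n) (σ := fun n => ‖p‖^2 - β n * ‖x n‖^2)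
      (ε := fun _ => (0:ℝ))
      (fun n => sq_nonneg _)
      (fun n => show (0:ℝ) ≤ 1 - β n by linarith [(hβ n).2])
      (fun n => show 1 - β n ≤ (1:ℝ) by linarith [(hβ n).1])
      ?_ hσev summable_zero (fun n => le_refl 0) ?_
    · rw [← not_summable_iff_tendsto_nat_atTop_of_nonneg (fun n => by linarith [(hβ n).2])]
      exact hβdiv
    · intro n
      have h1 : ‖x (n+1) - p‖ ≤ ‖β n • x n - p‖ := by
        rw [hiter n]
        calc ‖((1 - lam n) • (β n • x n) + lam n • T (β n • x n)) - p‖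
            = ‖((1 - lam n) • (β n • x n) + lam n • T (β n • x n))
                - ((1 - lam n) • p + lam n • T p)‖ := by rw [hRfix (lam n) p hTp]
          _ ≤ ‖β n • x n - p‖ := hR (lam n) (hlam' n).1 (hlam' n).2 _ _
      have h2 : ‖β n • x n - p‖^2
          = β n * ‖x n - p‖^2 + (1 - β n)*‖p‖^2 - β n*(1-β n)*‖x n‖^2 := by
        have hid : β n • x n - p = β n • (x n - p) + (1 - β n) • (-p) := by module
        rw [hid, norm_convex_comb_sq]
        have h3 : (x n - p) - (-p) = x n := by abel
        rw [h3, norm_neg]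
      have h3 : ‖x (n+1) - p‖^2 ≤ ‖β n • x n - p‖^2 :=
        pow_le_pow_left₀ (norm_nonneg _) h1 2
      have hgoal : ‖x (n+1) - p‖^2 ≤ (1 - (1 - β n)) * ‖x n - p‖^2
          + (1 - β n) * (‖p‖^2 - β n * ‖x n‖^2) + 0 := by
        nlinarith [h2, h3]
      exact hgoal
  -- conclusion
  have hxnorm : Tendsto (fun n => ‖x n - p‖) atTop (nhds 0) := by
    have h := (Real.continuous_sqrt.tendsto 0).comp hxu
    have heq : (fun n => Real.sqrt (‖x n - p‖^2)) = fun n => ‖x n - p‖ :=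
      funext fun n => Real.sqrt_sq (norm_nonneg _)
    rw [show Real.sqrt 0 = 0 from Real.sqrt_zero] at h
    exact heq ▸ h
  rw [tendsto_iff_norm_sub_tendsto_zero]
  exact hxnorm
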